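/- Let g_1, ..., g_n be linearly independent real analytic functions on a compact interval I (extending analytically to a neighborhood of I). Then there exists a natural number N, depending only on g_1, ..., g_n and I, such that every nontrivial real linear combination a_1 g_1 + ... + a_n g_n has at most N zeros in I. -/

import Mathlib

open Set


/-- Rolle step: from a finset of zeros of `f` in `[u,v]` we get a finset of zeros of
`deriv f`, one fewer, all below the max. -/
lemma aux_rolle_step (f : ℝ → ℝ) (u v : ℝ) (hf : ContinuousOn f (Set.Icc u v)) :
    ∀ (S : Finset ℝ), (↑S ⊆ {x ∈ Set.Icc u v | f x = 0}) → ∀ (hne : S.Nonempty),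
      ∃ T : Finset ℝ, T.card = S.card - 1 ∧ (↑T ⊆ {x ∈ Set.Icc u v | deriv f x = 0}) ∧
        ∀ t ∈ T, t < S.max' hne := by
  intro S
  induction S using Finset.strongInduction with
  | _ S ih =>
    intro hS hne
    set M := S.max' hne with hM
    have hMS : M ∈ S := S.max'_mem hne
    by_cases hne' : (S.erase M).Nonempty
    · set M' := (S.erase M).max' hne' with hM'
      have hM'S : M' ∈ S.erase M := (S.erase M).max'_mem hne'
      have hM'ne : M' ≠ M := Finset.ne_of_mem_erase hM'S
      have hM'mem : M' ∈ S := Finset.mem_of_mem_erase hM'S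
      have hlt : M' < M := lt_of_le_of_ne (S.le_max' _ hM'mem) hM'ne
      have hMz : M ∈ {x ∈ Set.Icc u v | f x = 0} := hS hMS
      have hM'z : M' ∈ {x ∈ Set.Icc u v | f x = 0} := hS hM'mem
      have hsub : Set.Icc M' M ⊆ Set.Icc u v :=
        Set.Icc_subset_Icc hM'z.1.1 hMz.1.2
      obtain ⟨c, hc, hc0⟩ := exists_deriv_eq_zero hlt (hf.mono hsub)
        (hM'z.2.trans hMz.2.symm)
      obtain ⟨T', hT'card, hT'sub, hT'lt⟩ := ih (S.erase M) (Finset.erase_ssubset hMS)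
        ((Finset.coe_subset.2 (Finset.erase_subset M S)).trans hS) hne'
      have hcT' : c ∉ T' := fun h => absurd (hT'lt c h) (not_lt.2 hc.1.le)
      refine ⟨insert c T', ?_, ?_, ?_⟩
      · rw [Finset.card_insert_of_notMem hcT', hT'card,
          Finset.card_erase_of_mem hMS]
        have : 2 ≤ S.card := Finset.one_lt_card.2 ⟨M', hM'mem, M, hMS, hM'ne⟩
        omega
      · intro t ht
        rcases Finset.mem_insert.1 ht with rfl | ht
        · exact ⟨⟨hM'z.1.1.trans hc.1.le, hc.2.le.trans hMz.1.2⟩, hc0⟩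
        · exact hT'sub ht
      · intro t ht
        rcases Finset.mem_insert.1 ht with rfl | ht
        · exact hc.2
        · exact (hT'lt t ht).trans hlt
    · have : S = {M} := by
        apply Finset.eq_singleton_iff_unique_mem.2 ⟨hMS, fun x hx => ?_⟩
        by_contra hxM
        exact hne' ⟨x, Finset.mem_erase.2 ⟨hxM, hx⟩⟩
      refine ⟨∅, by simp [this], by simp, by simp⟩


/-- If `F (j+1)` is the derivative of `F j` on an open set `V ⊇ [u,v]` and `F m` has no
zero in `[u,v]`, then any finset of zeros of `F 0` in `[u,v]` has at most `m` elements. -/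
lemma aux_count_finset (m : ℕ) : ∀ (F : ℕ → ℝ → ℝ) (u v : ℝ) (V : Set ℝ), IsOpen V →
    Set.Icc u v ⊆ V → (∀ j, ∀ x ∈ V, HasDerivAt (F j) (F (j+1) x) x) →
    (∀ x ∈ Set.Icc u v, F m x ≠ 0) →
    ∀ S : Finset ℝ, (↑S ⊆ {x ∈ Set.Icc u v | F 0 x = 0}) → S.card ≤ m := by
  induction m with
  | zero =>
    intro F u v V hV hIV hd hm S hS
    have : S = ∅ := by
      rcases Finset.eq_empty_or_nonempty S with rfl | ⟨x, hx⟩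
      · rfl
      · exact absurd ((hS hx).2) (hm x (hS hx).1)
    simp [this]
  | succ m ih =>
    intro F u v V hV hIV hd hm S hS
    rcases S.eq_empty_or_nonempty with rfl | hne
    · simp
    have hcont : ContinuousOn (F 0) (Set.Icc u v) := fun x hx =>
      ((hd 0 x (hIV hx)).continuousAt).continuousWithinAt
    obtain ⟨T, hTcard, hTsub, -⟩ := aux_rolle_step (F 0) u v hcont S hS hne
    have hT : ↑T ⊆ {x ∈ Set.Icc u v | F 1 x = 0} := by
      intro t ht
      obtain ⟨ht1, ht2⟩ := hTsub ht
      exact ⟨ht1, by rw [← (hd 0 t (hIV ht1)).deriv]; exact ht2⟩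
    have := ih (fun j => F (j+1)) u v V hV hIV (fun j x hx => hd (j+1) x hx) hm T hT
    omega

lemma aux_count (F : ℕ → ℝ → ℝ) (u v : ℝ) (V : Set ℝ) (hV : IsOpen V)
    (hIV : Set.Icc u v ⊆ V) (hd : ∀ j, ∀ x ∈ V, HasDerivAt (F j) (F (j+1) x) x)
    (m : ℕ) (hm : ∀ x ∈ Set.Icc u v, F m x ≠ 0) :
    {x ∈ Set.Icc u v | F 0 x = 0}.Finite ∧ {x ∈ Set.Icc u v | F 0 x = 0}.ncard ≤ m := by
  set Z := {x ∈ Set.Icc u v | F 0 x = 0} with hZ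
  have key : ∀ S : Finset ℝ, ↑S ⊆ Z → S.card ≤ m :=
    aux_count_finset m F u v V hV hIV hd hm
  have hfin : Z.Finite := by
    by_contra hinf
    have hinf' : Z.Infinite := hinf
    obtain ⟨S, hSsub, hScard⟩ := hinf'.exists_subset_card_eq (m + 1)
    have := key S hSsub
    omega
  refine ⟨hfin, ?_⟩
  rw [Set.ncard_eq_toFinset_card Z hfin]
  exact key _ (by simp)


lemma aux_itder {f : ℝ → ℝ} {U : Set ℝ} (h : AnalyticOnNhd ℝ f U) (j : ℕ) :
    AnalyticOnNhd ℝ (iteratedDeriv j f) U := by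
  induction j with
  | zero => simpa [iteratedDeriv_zero] using h
  | succ j ih => rw [iteratedDeriv_succ]; exact ih.deriv

lemma aux_hasDerivAt {f : ℝ → ℝ} {U : Set ℝ} (h : AnalyticOnNhd ℝ f U) (j : ℕ)
    {x : ℝ} (hx : x ∈ U) :
    HasDerivAt (iteratedDeriv j f) (iteratedDeriv (j+1) f x) x := by
  have := ((aux_itder h j) x hx).differentiableAt.hasDerivAt
  rwa [← iteratedDeriv_succ] at this

lemma aux_comb_hasDerivAt {n : ℕ} {g : Fin n → ℝ → ℝ} {U : Set ℝ}
    (hg : ∀ i, AnalyticOnNhd ℝ (g i) U) (c : Fin n → ℝ) (j : ℕ) {x : ℝ} (hx : x ∈ U) :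
    HasDerivAt (fun y => ∑ i, c i * iteratedDeriv j (g i) y)
      (∑ i, c i * iteratedDeriv (j+1) (g i) x) x :=
  HasDerivAt.fun_sum fun i _ => (aux_hasDerivAt (hg i) j hx).const_mul (c i)

lemma aux_comb_iteratedDeriv {n : ℕ} {g : Fin n → ℝ → ℝ} {U : Set ℝ} (hU : IsOpen U)
    (hg : ∀ i, AnalyticOnNhd ℝ (g i) U) (c : Fin n → ℝ) (j : ℕ) :
    ∀ x ∈ U, iteratedDeriv j (fun y => ∑ i, c i * g i y) x
      = ∑ i, c i * iteratedDeriv j (g i) x := by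
  induction j with
  | zero => intro x hx; simp [iteratedDeriv_zero]
  | succ j ih =>
    intro x hx
    rw [iteratedDeriv_succ]
    have hev : iteratedDeriv j (fun y => ∑ i, c i * g i y)
        =ᶠ[nhds x] (fun y => ∑ i, c i * iteratedDeriv j (g i) y) := by
      filter_upwards [hU.mem_nhds hx] with y hy using ih y hy
    rw [hev.deriv_eq]
    exact (aux_comb_hasDerivAt hg c j hx).deriv

lemma aux_key (n : ℕ) (a b : ℝ) (U : Set ℝ) (hU : IsOpen U)
    (hIU : Set.Icc a b ⊆ U) (g : Fin n → ℝ → ℝ)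
    (hg : ∀ i, AnalyticOnNhd ℝ (g i) U)
    (hind : ∀ c : Fin n → ℝ, (∀ x ∈ Set.Icc a b, ∑ i, c i * g i x = 0) → c = 0)
    (c : Fin n → ℝ) (x : ℝ) (hx : x ∈ Set.Icc a b)
    (h0 : ∀ j, ∑ i, c i * iteratedDeriv j (g i) x = 0) : c = 0 := by
  set f : ℝ → ℝ := fun y => ∑ i, c i * g i y with hf
  have hfa : AnalyticOnNhd ℝ f U :=
    Finset.analyticOnNhd_fun_sum Finset.univ
      (fun i _ => analyticOnNhd_const.mul (hg i))
  have hxU : x ∈ U := hIU hx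
  obtain ⟨p, hp⟩ := hfa x hxU
  have hp0 : p = 0 := by
    have hcoeff : ∀ k, p k = 0 := by
      intro k
      obtain ⟨r, hr⟩ := hp
      have h1 := hr.factorial_smul (1 : ℝ) k
      have h2 : iteratedFDeriv ℝ k f x (fun _ => (1:ℝ)) = iteratedDeriv k f x :=
        (iteratedDeriv_eq_iteratedFDeriv ..).symm
      have h3 : iteratedDeriv k f x = 0 := by
        rw [aux_comb_iteratedDeriv hU hg c k x hxU]; exact h0 k
      have h4 : k.factorial • p.coeff k = 0 := by
        have hc : p.coeff k = (p k) fun _ => (1:ℝ) := rfl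
        rw [hc, h1, h2, h3]
      have h5 : (k.factorial : ℝ) * p.coeff k = 0 := by
        rwa [nsmul_eq_mul] at h4
      have h6 : p.coeff k = 0 :=
        (mul_eq_zero.1 h5).resolve_left (by exact_mod_cast k.factorial_ne_zero)
      exact (FormalMultilinearSeries.coeff_eq_zero).1 h6
    exact FormalMultilinearSeries.ext hcoeff
  rw [hp0] at hp
  have hev : f =ᶠ[nhds x] 0 := hp.eventually_eq_zero
  set V := connectedComponentIn U x with hV
  have hVsub : V ⊆ U := connectedComponentIn_subset U x
  have heq : Set.EqOn f 0 V :=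
    (hfa.mono hVsub).eqOn_zero_of_preconnected_of_eventuallyEq_zero
      isPreconnected_connectedComponentIn (mem_connectedComponentIn hxU) hev
  have hIV : Set.Icc a b ⊆ V := isPreconnected_Icc.subset_connectedComponentIn hx hIU
  exact hind c (fun y hy => heq (hIV hy))

lemma aux_ncard_biUnion_le {α ι : Type*} [DecidableEq ι] (t : Finset ι) (B : ι → Set α)
    (hfin : ∀ i ∈ t, (B i).Finite) :
    (⋃ i ∈ t, B i).ncard ≤ ∑ i ∈ t, (B i).ncard := by
  induction t using Finset.induction with
  | empty => simp
  | insert _ _ ha ih =>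
    rename_i a s
    rw [Finset.sum_insert ha]
    refine le_trans ?_ (Nat.add_le_add le_rfl (ih fun i hi => hfin i (Finset.mem_insert_of_mem hi)))
    rw [Finset.set_biUnion_insert]
    exact Set.ncard_union_le _ _

/-- Hurwitz-type corollary: for linearly independent real analytic functions
`g 0, ..., g (n-1)` on (a neighbourhood of) a compact interval `[a, b]`, there
is an `N` such that every nontrivial linear combination has at most `N` zeros
in `[a, b]`. -/
theorem stmt_8 (n : ℕ) (a b : ℝ) (hab : a < b) (U : Set ℝ) (hU : IsOpen U)
    (hIU : Set.Icc a b ⊆ U) (g : Fin n → ℝ → ℝ)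
    (hg : ∀ i, AnalyticOnNhd ℝ (g i) U)
    (hind : ∀ c : Fin n → ℝ, (∀ x ∈ Set.Icc a b, ∑ i, c i * g i x = 0) → c = 0) :
    ∃ N : ℕ, ∀ c : Fin n → ℝ, c ≠ 0 →
      {x ∈ Set.Icc a b | ∑ i, c i * g i x = 0}.ncard ≤ N := by
  classical
  set Φ : ℕ → ((Fin n → ℝ) × ℝ) → ℝ :=
    fun j q => ∑ i, q.1 i * iteratedDeriv j (g i) q.2 with hΦdef
  have hΦcont : ∀ j, ContinuousOn (Φ j) (Set.univ ×ˢ U) := by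
    intro j
    refine continuousOn_finset_sum _ fun i _ => ContinuousOn.mul ?_ ?_
    · exact ((continuous_apply i).comp continuous_fst).continuousOn
    · exact ((aux_itder (hg i) j).continuousOn).comp continuous_snd.continuousOn
        (fun q hq => hq.2)
  set K : Set ((Fin n → ℝ) × ℝ) := Metric.sphere 0 1 ×ˢ Set.Icc a b with hKdef
  have hK : IsCompact K := (isCompact_sphere 0 1).prod isCompact_Icc
  have key : ∀ p ∈ K, ∃ (j : ℕ) (ε : ℝ), 0 < ε ∧ Metric.ball p.2 ε ⊆ U ∧
      ∀ q ∈ Metric.ball p ε, Φ j q ≠ 0 := by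
    rintro ⟨c, x⟩ ⟨hc, hx⟩
    have hc1 : ‖c‖ = 1 := mem_sphere_zero_iff_norm.1 hc
    have hcne : c ≠ 0 := fun h => by simp [h] at hc1
    have hj : ∃ j, Φ j (c, x) ≠ 0 := by
      by_contra h
      push_neg at h
      exact hcne (aux_key n a b U hU hIU g hg hind c x hx h)
    obtain ⟨j, hj⟩ := hj
    have hO : IsOpen ((Set.univ ×ˢ U) ∩ Φ j ⁻¹' {0}ᶜ) :=
      (hΦcont j).isOpen_inter_preimage (isOpen_univ.prod hU) isOpen_compl_singleton
    have hmem : (c, x) ∈ (Set.univ ×ˢ U) ∩ Φ j ⁻¹' {0}ᶜ :=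
      ⟨⟨trivial, hIU hx⟩, hj⟩
    obtain ⟨ε, hε, hball⟩ := Metric.isOpen_iff.1 hO _ hmem
    refine ⟨j, ε, hε, ?_, ?_⟩
    · intro y hy
      have : (c, y) ∈ Metric.ball (c, x) ε := by
        rw [← ball_prod_same]
        exact ⟨Metric.mem_ball_self hε, hy⟩
      exact ((hball this).1).2
    · exact fun q hq => (hball hq).2
  choose J ε hε hballU hΦne using key
  have hcover : ∀ p (hp : p ∈ K), Metric.ball p (ε p hp / 2) ∈ nhds p :=
    fun p hp => Metric.ball_mem_nhds p (half_pos (hε p hp))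
  obtain ⟨t, ht⟩ := hK.elim_nhds_subcover' (fun p hp => Metric.ball p (ε p hp / 2)) hcover
  set N : ℕ := ∑ p ∈ t, J p p.2 with hNdef
  refine ⟨N, ?_⟩
  -- first handle unit vectors
  have hunit : ∀ c : Fin n → ℝ, ‖c‖ = 1 →
      {x ∈ Set.Icc a b | ∑ i, c i * g i x = 0}.ncard ≤ N := by
    intro c hc1
    set Z := {x ∈ Set.Icc a b | ∑ i, c i * g i x = 0} with hZdef
    set B : ↥K → Set ℝ := fun p =>
      if c ∈ Metric.ball (↑p : (Fin n → ℝ) × ℝ).1 (ε ↑p p.2 / 2)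
      then Z ∩ Metric.closedBall (↑p : (Fin n → ℝ) × ℝ).2 (ε ↑p p.2 / 2) else ∅ with hBdef
    have hBbound : ∀ p ∈ t, (B p).Finite ∧ (B p).ncard ≤ J ↑p p.2 := by
      intro p _
      by_cases hcb : c ∈ Metric.ball (↑p : (Fin n → ℝ) × ℝ).1 (ε ↑p p.2 / 2)
      · set q := (p : (Fin n → ℝ) × ℝ) with hq
        have hpK : q ∈ K := p.2
        set e := ε q hpK with he'
        have he : 0 < e := hε q hpK
        have hBp : B p = Z ∩ Metric.closedBall q.2 (e / 2) := if_pos hcb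
        have hsub : Set.Icc (q.2 - e/2) (q.2 + e/2) ⊆ Metric.ball q.2 e := by
          rw [← Real.closedBall_eq_Icc]
          exact Metric.closedBall_subset_ball (by linarith)
        have hm : ∀ x ∈ Set.Icc (q.2 - e/2) (q.2 + e/2),
            (∑ i, c i * iteratedDeriv (J q hpK) (g i) x) ≠ 0 := by
          intro x hx
          have hqx : (c, x) ∈ Metric.ball q e := by
            rw [← ball_prod_same]
            exact ⟨Metric.ball_subset_ball (by linarith) hcb, hsub hx⟩
          exact hΦne q hpK (c, x) hqx
        obtain ⟨hfin, hcard⟩ := aux_count (fun j y => ∑ i, c i * iteratedDeriv j (g i) y)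
          (q.2 - e/2) (q.2 + e/2) (Metric.ball q.2 e) Metric.isOpen_ball hsub
          (fun j x hx => aux_comb_hasDerivAt hg c j (hballU q hpK hx)) (J q hpK) hm
        have hBsub : B p ⊆ {x ∈ Set.Icc (q.2 - e/2) (q.2 + e/2) |
            (fun j y => ∑ i, c i * iteratedDeriv j (g i) y) 0 x = 0} := by
          intro x hx
          rw [hBp] at hx
          obtain ⟨⟨hx1, hx2⟩, hx3⟩ := hx
          refine ⟨by rwa [← Real.closedBall_eq_Icc], ?_⟩
          simpa [iteratedDeriv_zero] using hx2
        exact ⟨hfin.subset hBsub, le_trans (Set.ncard_le_ncard hBsub hfin) hcard⟩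
      · have hBp : B p = ∅ := if_neg hcb
        simp [hBp]
    have hZcover : Z ⊆ ⋃ p ∈ t, B p := by
      intro x hx
      have hcx : (c, x) ∈ K := ⟨mem_sphere_zero_iff_norm.2 hc1, hx.1⟩
      obtain ⟨p, hpt, hpx⟩ := Set.mem_iUnion₂.1 (ht hcx)
      rw [← ball_prod_same] at hpx
      obtain ⟨h1, h2⟩ := hpx
      refine Set.mem_biUnion hpt ?_
      have hBp : B p = Z ∩ Metric.closedBall (↑p : (Fin n → ℝ) × ℝ).2 (ε ↑p p.2 / 2) :=
        if_pos h1
      rw [hBp]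
      exact ⟨hx, Metric.ball_subset_closedBall h2⟩
    have hfinU : (⋃ p ∈ t, B p).Finite :=
      Set.Finite.biUnion t.finite_toSet (fun p hp => (hBbound p hp).1)
    calc Z.ncard ≤ (⋃ p ∈ t, B p).ncard := Set.ncard_le_ncard hZcover hfinU
      _ ≤ ∑ p ∈ t, (B p).ncard :=
          aux_ncard_biUnion_le t B (fun p hp => (hBbound p hp).1)
      _ ≤ ∑ p ∈ t, J ↑p p.2 := Finset.sum_le_sum (fun p hp => (hBbound p hp).2)
      _ = N := rfl
  intro c hc
  have hcn : ‖c‖ ≠ 0 := fun h => hc (norm_eq_zero.1 h)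
  have h1 : ‖(‖c‖⁻¹ : ℝ) • c‖ = 1 := norm_smul_inv_norm hc
  have := hunit (‖c‖⁻¹ • c) h1
  have hset : {x ∈ Set.Icc a b | ∑ i, (‖c‖⁻¹ • c) i * g i x = 0}
      = {x ∈ Set.Icc a b | ∑ i, c i * g i x = 0} := by
    ext x
    simp only [Set.mem_setOf_eq, Pi.smul_apply, smul_eq_mul, and_congr_right_iff]
    intro _
    simp only [mul_assoc, ← Finset.mul_sum, mul_eq_zero, inv_eq_zero, norm_eq_zero]
    constructor
    · rintro (h | h)
      · exact absurd h hc
      · exact h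
    · intro h
      exact Or.inr h
  rw [hset] at this
  exact this
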